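/- For any star-subalgebra A of M_n(ℂ) containing the identity, the double commutant of A equals A: Comm(Comm(A)) = A. -/

import Mathlib

set_option maxHeartbeats 1000000
set_option synthInstance.maxHeartbeats 1000000

open Matrix Kronecker

namespace DoubleCommutantAux

variable {n : Type*} [Fintype n] [DecidableEq n]

/-- If `T` and its adjoint preserve a subspace `U`, then `T` commutes with the
orthogonal projection onto `U`. -/
lemma commute_projection {E : Type*} [NormedAddCommGroup E] [InnerProductSpace ℂ E]
    [FiniteDimensional ℂ E] (U : Submodule ℂ E) (T : E →L[ℂ] E)
    (h1 : ∀ v ∈ U, T v ∈ U) (h2 : ∀ v ∈ U, (star T) v ∈ U) :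
    T * (U.subtypeL ∘L U.orthogonalProjectionOnto) = (U.subtypeL ∘L U.orthogonalProjectionOnto) * T := by
  set P := U.subtypeL ∘L U.orthogonalProjectionOnto with hPdef
  have hPmem : ∀ v, P v ∈ U := fun v => (U.orthogonalProjectionOnto v).2
  have hPid : ∀ v ∈ U, P v = v := fun v hv => by
    exact (Submodule.starProjection_eq_self_iff (K := U)).2 hv
  have key : ∀ (S : E →L[ℂ] E), (∀ v ∈ U, S v ∈ U) → P * (S * P) = S * P := by
    intro S hS
    ext v
    exact hPid _ (hS _ (hPmem v))
  have hPsa : star P = P := isSelfAdjoint_starProjection U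
  have e1 : P * (T * P) = T * P := key T h1
  have e2 : P * (star T * P) = star T * P := key (star T) h2
  have e3 : P * T * P = P * T := by
    have := congrArg star e2
    simpa only [StarMul.star_mul, star_star, hPsa, mul_assoc] using this
  calc T * P = P * (T * P) := e1.symm
    _ = P * T := by rw [← mul_assoc, e3]

/-- The amplification `a ↦ a ⊗ₖ 1`. -/
def emb (a : Matrix n n ℂ) : Matrix (n × n) (n × n) ℂ := a ⊗ₖ (1 : Matrix n n ℂ)

/-- The `(k, l)` block of an amplified matrix. -/
def blk (T : Matrix (n × n) (n × n) ℂ) (k l : n) : Matrix n n ℂ := fun i j => T (i, k) (j, l)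

lemma mul_emb_apply (T : Matrix (n × n) (n × n) ℂ) (a : Matrix n n ℂ) (i k j l : n) :
    (T * emb a) (i, k) (j, l) = (blk T k l * a) i j := by
  simp only [emb, Matrix.mul_apply, blk, Fintype.sum_prod_type, kroneckerMap_apply,
    Matrix.one_apply, mul_ite, mul_one, mul_zero, Finset.sum_ite_eq', Finset.mem_univ, if_true]

lemma emb_mul_apply (a : Matrix n n ℂ) (T : Matrix (n × n) (n × n) ℂ) (i k j l : n) :
    (emb a * T) (i, k) (j, l) = (a * blk T k l) i j := by
  simp only [emb, Matrix.mul_apply, blk, Fintype.sum_prod_type, kroneckerMap_apply,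
    Matrix.one_apply, ite_mul, one_mul, zero_mul]
  rw [Finset.sum_comm]
  simp

lemma emb_mul (a b : Matrix n n ℂ) : emb (a * b) = emb a * emb b := by
  simp [emb, ← Matrix.mul_kronecker_mul]

lemma emb_star (a : Matrix n n ℂ) : emb (star a) = star (emb a) := by
  ext ⟨i, k⟩ ⟨j, l⟩
  by_cases h : k = l <;>
    simp [emb, Matrix.star_apply, Matrix.one_apply, h, eq_comm]

/-- Blocks of elements of the commutant of the amplified algebra lie in the commutant. -/
lemma blk_mem_centralizer (S : Set (Matrix n n ℂ)) (T : Matrix (n × n) (n × n) ℂ)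
    (hT : T ∈ Set.centralizer (emb '' S)) (k l : n) :
    blk T k l ∈ Set.centralizer S := by
  intro a ha
  have h := hT (emb a) ⟨a, ha, rfl⟩
  ext i j
  have := congrFun (congrFun h (i, k)) (j, l)
  rw [mul_emb_apply, emb_mul_apply] at this
  exact this.symm ▸ rfl

/-- An element of the double commutant, amplified, commutes with every element of the
commutant of the amplified algebra. -/
lemma emb_comm (S : Set (Matrix n n ℂ)) (x : Matrix n n ℂ)
    (hx : x ∈ Set.centralizer (Set.centralizer S))
    (T : Matrix (n × n) (n × n) ℂ) (hT : T ∈ Set.centralizer (emb '' S)) :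
    T * emb x = emb x * T := by
  ext ⟨i, k⟩ ⟨j, l⟩
  rw [mul_emb_apply, emb_mul_apply]
  rw [hx (blk T k l) (blk_mem_centralizer S T hT k l)]

/-- Reshape of a matrix into a Euclidean vector. -/
noncomputable def mu : Matrix n n ℂ →ₗ[ℂ] EuclideanSpace ℂ (n × n) where
  toFun a := (WithLp.equiv 2 _).symm (fun p => a p.1 p.2)
  map_add' a b := rfl
  map_smul' c a := rfl

lemma mu_inj : Function.Injective (mu (n := n)) := by
  intro a b h
  ext i j
  exact congrFun (congrArg (WithLp.equiv 2 _) h) (i, j)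

lemma emb_apply_mu (a c : Matrix n n ℂ) :
    Matrix.toEuclideanCLM (𝕜 := ℂ) (emb a) (mu c) = mu (a * c) := by
  show Matrix.toEuclideanCLM (𝕜 := ℂ) (emb a) ((WithLp.equiv 2 _).symm _) = _
  rw [WithLp.equiv_symm_apply, Matrix.toEuclideanCLM_toLp]
  apply congrArg
  funext ⟨i, k⟩
  simp [emb, Matrix.mulVec, dotProduct, Fintype.sum_prod_type,
    kroneckerMap_apply, Matrix.one_apply, Matrix.mul_apply, ite_mul, one_mul, zero_mul,
    mul_ite, mul_zero, mul_one, WithLp.equiv_symm_apply]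

end DoubleCommutantAux

/-- finite-dimensional double commutant theorem: for a unital
star-subalgebra A of M_n(ℂ), Comm(Comm(A)) = A. -/
theorem double_commutant {n : Type*} [Fintype n] [DecidableEq n]
    (A : StarSubalgebra ℂ (Matrix n n ℂ)) :
    Set.centralizer (Set.centralizer (A : Set (Matrix n n ℂ)))
      = (A : Set (Matrix n n ℂ)) := by
  open DoubleCommutantAux in
  refine le_antisymm ?_ Set.subset_centralizer_centralizer
  intro x hx
  -- the subspace W = mu '' A
  set E := EuclideanSpace ℂ (n × n)
  set W : Submodule ℂ E := (Subalgebra.toSubmodule A.toSubalgebra).map mu with hW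
  have hmemW : ∀ c ∈ A, mu c ∈ W := fun c hc => ⟨c, hc, rfl⟩
  -- W is invariant under emb a and its adjoint for a ∈ A
  have hinv : ∀ a ∈ A, ∀ v ∈ W, Matrix.toEuclideanCLM (𝕜 := ℂ) (emb a) v ∈ W := by
    rintro a ha v ⟨c, hc, rfl⟩
    rw [emb_apply_mu]
    exact hmemW _ (mul_mem ha hc)
  set P : E →L[ℂ] E := W.subtypeL ∘L W.orthogonalProjectionOnto with hP
  -- P commutes with toEuclideanCLM (emb a) for a ∈ A
  have hcomm : ∀ a ∈ A, Matrix.toEuclideanCLM (𝕜 := ℂ) (emb a) * P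
      = P * Matrix.toEuclideanCLM (𝕜 := ℂ) (emb a) := by
    intro a ha
    refine commute_projection W _ (hinv a ha) ?_
    have : star (Matrix.toEuclideanCLM (𝕜 := ℂ) (emb a))
        = Matrix.toEuclideanCLM (𝕜 := ℂ) (emb (star a)) := by
      rw [emb_star, map_star]
    rw [this]
    exact hinv _ (star_mem ha)
  -- pull P back to a matrix p ∈ centralizer (emb '' A)
  set p : Matrix (n × n) (n × n) ℂ := (Matrix.toEuclideanCLM (𝕜 := ℂ)).symm P with hp
  have hPp : Matrix.toEuclideanCLM (𝕜 := ℂ) p = P := StarAlgEquiv.apply_symm_apply _ _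
  have hpc : p ∈ Set.centralizer (emb '' (A : Set (Matrix n n ℂ))) := by
    rintro T ⟨a, ha, rfl⟩
    have hm : ∀ u v : Matrix (n × n) (n × n) ℂ, Matrix.toEuclideanCLM (𝕜 := ℂ) (u * v)
        = Matrix.toEuclideanCLM (𝕜 := ℂ) u * Matrix.toEuclideanCLM (𝕜 := ℂ) v :=
      fun u v => map_mul _ u v
    have heq : Matrix.toEuclideanCLM (𝕜 := ℂ) (emb a * p)
        = Matrix.toEuclideanCLM (𝕜 := ℂ) (p * emb a) := by
      rw [hm, hm, hPp]
      exact hcomm a ha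
    exact (Matrix.toEuclideanCLM (𝕜 := ℂ)).injective heq
  -- hence emb x commutes with p, so with P
  have hxp : Matrix.toEuclideanCLM (𝕜 := ℂ) (emb x) * P
      = P * Matrix.toEuclideanCLM (𝕜 := ℂ) (emb x) := by
    have := emb_comm (A : Set (Matrix n n ℂ)) x hx p hpc
    have hm : ∀ u v : Matrix (n × n) (n × n) ℂ, Matrix.toEuclideanCLM (𝕜 := ℂ) (u * v)
        = Matrix.toEuclideanCLM (𝕜 := ℂ) u * Matrix.toEuclideanCLM (𝕜 := ℂ) v :=
      fun u v => map_mul _ u v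
    have h2 := congrArg (Matrix.toEuclideanCLM (𝕜 := ℂ)) this
    rw [hm, hm, hPp] at h2
    exact h2.symm
  -- conclude: mu x = emb x applied to mu 1, which stays in W
  have hxi : mu x = Matrix.toEuclideanCLM (𝕜 := ℂ) (emb x) (mu 1) := by
    rw [emb_apply_mu, mul_one]
  have hone : mu (1 : Matrix n n ℂ) ∈ W := hmemW 1 (one_mem A)
  have hfix : P (mu (1 : Matrix n n ℂ)) = mu 1 := by
    exact (Submodule.starProjection_eq_self_iff (K := W)).2 hone
  have : mu x ∈ W := by
    rw [hxi, ← hfix]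
    have := congrFun (congrArg (fun f : E →L[ℂ] E => (f : E → E)) hxp) (mu 1)
    simp only [ContinuousLinearMap.mul_apply] at this
    rw [this]
    exact (W.orthogonalProjectionOnto _).2
  obtain ⟨c, hc, hcx⟩ := this
  rwa [← mu_inj hcx]
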